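/- For every epoch t ≥ 1 of SAGA-RR and every iteration index 0 ≤ i < N, the aggregate second-order moment of the history variables satisfies the exact identity E[Σ_{n=1}^N ‖φ_{i,n}^t‖²] = Σ_{n'=1}^{i} E‖w_{n'}^t‖² + ((N−i)/N) Σ_{n=1}^N E‖w_n^{t−1}‖². -/

import Mathlib

open MeasureTheory ProbabilityTheory Finset
open scoped RealInnerProductSpace ENNReal

section SagaAux
variable {M N : ℕ}
noncomputable def sagaInner (Qg : Fin N → EuclideanSpace ℝ (Fin M) → EuclideanSpace ℝ (Fin M))
    (μ : ℝ) (π : Equiv.Perm (Fin N)) :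
    ℕ → (EuclideanSpace ℝ (Fin M) × (Fin N → EuclideanSpace ℝ (Fin M))) →
      (EuclideanSpace ℝ (Fin M) × (Fin N → EuclideanSpace ℝ (Fin M)))
  | 0, p => p
  | (i+1), p =>
    let q := sagaInner Qg μ π i p
    if h : i < N then
      let n := π ⟨i, h⟩
      let w' := q.1 - μ • (Qg n q.1 - q.2 n + (N : ℝ)⁻¹ • ∑ m, q.2 m)
      (w', Function.update q.2 n (Qg n w'))
    else q
noncomputable def sagaState (Qg : Fin N → EuclideanSpace ℝ (Fin M) → EuclideanSpace ℝ (Fin M))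
    (μ : ℝ) (s : ℕ → Equiv.Perm (Fin N)) : ℕ → (EuclideanSpace ℝ (Fin M) × (Fin N → EuclideanSpace ℝ (Fin M)))
  | 0 => (0, fun _ => 0)
  | (t+1) => sagaInner Qg μ (s t) N (sagaState Qg μ s t)
lemma sagaInner_succ_fst (Qg : Fin N → EuclideanSpace ℝ (Fin M) → EuclideanSpace ℝ (Fin M))
    (μ : ℝ) (π : Equiv.Perm (Fin N)) (p) {i : ℕ} (h : i < N) :
    (sagaInner Qg μ π (i+1) p).1 =
      (sagaInner Qg μ π i p).1 - μ • (Qg (π ⟨i, h⟩) (sagaInner Qg μ π i p).1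
        - (sagaInner Qg μ π i p).2 (π ⟨i, h⟩)
        + (N : ℝ)⁻¹ • ∑ m, (sagaInner Qg μ π i p).2 m) := by
  simp [sagaInner, h]
lemma sagaInner_succ_snd (Qg : Fin N → EuclideanSpace ℝ (Fin M) → EuclideanSpace ℝ (Fin M))
    (μ : ℝ) (π : Equiv.Perm (Fin N)) (p) {i : ℕ} (h : i < N) :
    (sagaInner Qg μ π (i+1) p).2 =
      Function.update (sagaInner Qg μ π i p).2 (π ⟨i, h⟩)
        (Qg (π ⟨i, h⟩) ((sagaInner Qg μ π (i+1) p).1)) := by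
  simp [sagaInner, h]
lemma sagaState_congr (Qg : Fin N → EuclideanSpace ℝ (Fin M) → EuclideanSpace ℝ (Fin M))
    (μ : ℝ) {s s' : ℕ → Equiv.Perm (Fin N)} :
    ∀ t, (∀ u, u < t → s u = s' u) → sagaState Qg μ s t = sagaState Qg μ s' t := by
  intro t
  induction t with
  | zero => intro _; rfl
  | succ t ih =>
    intro h
    show sagaInner Qg μ (s t) N (sagaState Qg μ s t) = sagaInner Qg μ (s' t) N (sagaState Qg μ s' t)
    rw [h t (Nat.lt_succ_self t), ih (fun u hu => h u (hu.trans (Nat.lt_succ_self t)))]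
end SagaAux

lemma integral_comp_finite' {Ω : Type} [MeasurableSpace Ω] (P : Measure Ω) [IsProbabilityMeasure P]
    {D : Type} [Fintype D] (V : Ω → D) (hV : ∀ d : D, MeasurableSet (V ⁻¹' {d}))
    (h : D → ℝ) :
    ∫ ω, h (V ω) ∂P = ∑ d : D, (P (V ⁻¹' {d})).toReal * h d := by
  classical
  have hpt : ∀ ω, h (V ω) = ∑ d : D, Set.indicator (V ⁻¹' {d}) (fun _ => h d) ω := by
    intro ω
    rw [Finset.sum_eq_single (V ω)]
    · simp
    · intro d _ hd
      apply Set.indicator_of_notMem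
      simp [Ne.symm hd]
    · simp
  calc ∫ ω, h (V ω) ∂P
      = ∫ ω, ∑ d : D, Set.indicator (V ⁻¹' {d}) (fun _ => h d) ω ∂P :=
        integral_congr_ae (Filter.Eventually.of_forall hpt)
    _ = ∑ d : D, ∫ ω, Set.indicator (V ⁻¹' {d}) (fun _ => h d) ω ∂P :=
        integral_finset_sum _ (fun d _ => (integrable_const (h d)).indicator (hV d))
    _ = ∑ d : D, (P (V ⁻¹' {d})).toReal * h d := by
        refine Finset.sum_congr rfl fun d _ => ?_
        rw [integral_indicator_const (h d) (hV d), smul_eq_mul]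
        rfl

/-
Setup: SAGA under random reshuffling (SAGA-RR).
`σp t` is the uniformly distributed random permutation of epoch `t` (0-based:
`σp t ω i` is the sample index σ^t(i+1) selected at iteration `i` of epoch `t`);
`w t i ω` is the iterate w_i^t and `φv t i n ω` the history variable φ_{i,n}^t.
`Qg n` is the gradient of the loss w ↦ Q(w; x_n), δ its Lipschitz constant,
ν the strong-convexity constant of J = (1/N)∑ₙ Q(·; xₙ), and `wstar` the
minimizer of J.
-/
theorem stmt_1
    {M N : ℕ} (hM : 1 ≤ M) (hN : 1 ≤ N)
    {Ω : Type} [MeasurableSpace Ω] (P : Measure Ω) [IsProbabilityMeasure P]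
    (σp : ℕ → Ω → Equiv.Perm (Fin N))
    (hσmeas : ∀ t, @Measurable Ω (Equiv.Perm (Fin N)) _ ⊤ (σp t))
    (hσunif : ∀ t (π : Equiv.Perm (Fin N)),
      P {ω | σp t ω = π} = ((Nat.factorial N : ℝ≥0∞))⁻¹)
    (hσindep : iIndepFun (m := fun _ : ℕ => (⊤ : MeasurableSpace (Equiv.Perm (Fin N)))) σp P)
    (Q : Fin N → EuclideanSpace ℝ (Fin M) → ℝ)
    (Qg : Fin N → EuclideanSpace ℝ (Fin M) → EuclideanSpace ℝ (Fin M))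
    (δ ν : ℝ) (hδ : 0 < δ) (hν : 0 < ν)
    (hQdiff : ∀ n x, HasGradientAt (Q n) (Qg n x) x)
    (hQconv : ∀ n, ConvexOn ℝ Set.univ (Q n))
    (hLip : ∀ n x y, ‖Qg n x - Qg n y‖ ≤ δ * ‖x - y‖)
    (hSC : ∀ x y : EuclideanSpace ℝ (Fin M),
      ν * ‖x - y‖ ^ 2 ≤ ⟪((N : ℝ)⁻¹ • ∑ n, Qg n x) - ((N : ℝ)⁻¹ • ∑ n, Qg n y), x - y⟫)
    (wstar : EuclideanSpace ℝ (Fin M))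
    (hstar : ∑ n, Qg n wstar = 0)
    (μ : ℝ) (hμpos : 0 < μ)
    (w : ℕ → ℕ → Ω → EuclideanSpace ℝ (Fin M))
    (φv : ℕ → ℕ → Fin N → Ω → EuclideanSpace ℝ (Fin M))
    (hw00 : ∀ ω, w 0 0 ω = 0)
    (hφ00 : ∀ n ω, Qg n (φv 0 0 n ω) = 0)
    (hwrec : ∀ (t : ℕ) (i : Fin N) (ω : Ω),
      w t ((i : ℕ) + 1) ω = w t (i : ℕ) ω - μ •
        (Qg (σp t ω i) (w t (i : ℕ) ω) - Qg (σp t ω i) (φv t (i : ℕ) (σp t ω i) ω)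
          + (N : ℝ)⁻¹ • ∑ m, Qg m (φv t (i : ℕ) m ω)))
    (hφrec1 : ∀ (t : ℕ) (i : Fin N) (ω : Ω),
      φv t ((i : ℕ) + 1) (σp t ω i) ω = w t ((i : ℕ) + 1) ω)
    (hφrec2 : ∀ (t : ℕ) (i : Fin N) (m : Fin N) (ω : Ω), m ≠ σp t ω i →
      φv t ((i : ℕ) + 1) m ω = φv t (i : ℕ) m ω)
    (hwepoch : ∀ (t : ℕ) (ω : Ω), w (t + 1) 0 ω = w t N ω)
    (hφepoch : ∀ (t : ℕ) (m : Fin N) (ω : Ω), φv (t + 1) 0 m ω = φv t N m ω)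
    :
    -- Second-order moment of the history variables.
    ∀ t : ℕ, 1 ≤ t → ∀ i : ℕ, i < N →
      ∫ ω, (∑ n, ‖φv t i n ω‖ ^ 2) ∂P =
        (∑ k ∈ Finset.range i, ∫ ω, ‖w t (k + 1) ω‖ ^ 2 ∂P) +
          (((N : ℝ) - i) / N) * ∑ k ∈ Finset.range N, ∫ ω, ‖w (t - 1) (k + 1) ω‖ ^ 2 ∂P := by
  classical
  have hNpos : 0 < N := hN
  -- Step within an epoch, relating `w`/`Qg∘φv` to the deterministic model.
  have base_step : ∀ (ω : Ω) (t : ℕ),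
      (w t 0 ω = (sagaState Qg μ (fun u => σp u ω) t).1 ∧
        ∀ n, Qg n (φv t 0 n ω) = (sagaState Qg μ (fun u => σp u ω) t).2 n) →
      ∀ i', i' ≤ N →
        w t i' ω = (sagaInner Qg μ (σp t ω) i' (sagaState Qg μ (fun u => σp u ω) t)).1 ∧
        ∀ n, Qg n (φv t i' n ω) =
          (sagaInner Qg μ (σp t ω) i' (sagaState Qg μ (fun u => σp u ω) t)).2 n := by
    intro ω t h0 i'
    induction i' with
    | zero => intro _; exact h0
    | succ k ih =>
      intro hk1
      have hkN : k < N := hk1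
      obtain ⟨ihw, ihφ⟩ := ih (le_of_lt hkN)
      have hrec : w t (k+1) ω = w t k ω - μ • (Qg (σp t ω ⟨k, hkN⟩) (w t k ω)
          - Qg (σp t ω ⟨k, hkN⟩) (φv t k (σp t ω ⟨k, hkN⟩) ω)
          + (N : ℝ)⁻¹ • ∑ m, Qg m (φv t k m ω)) := hwrec t ⟨k, hkN⟩ ω
      have hw1 : w t (k+1) ω =
          (sagaInner Qg μ (σp t ω) (k+1) (sagaState Qg μ (fun u => σp u ω) t)).1 := by
        rw [sagaInner_succ_fst Qg μ (σp t ω) _ hkN, hrec, ihw]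
        simp only [ihφ]
      refine ⟨hw1, fun n => ?_⟩
      rw [sagaInner_succ_snd Qg μ (σp t ω) _ hkN]
      by_cases hn : n = σp t ω ⟨k, hkN⟩
      · subst hn
        have hφ1 : φv t (k+1) (σp t ω ⟨k, hkN⟩) ω = w t (k+1) ω := hφrec1 t ⟨k, hkN⟩ ω
        rw [hφ1, Function.update_self, hw1]
      · have hφ2 : φv t (k+1) n ω = φv t k n ω := hφrec2 t ⟨k, hkN⟩ n ω hn
        rw [hφ2, Function.update_of_ne hn, ihφ n]
  have base : ∀ (ω : Ω) (t : ℕ),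
      w t 0 ω = (sagaState Qg μ (fun u => σp u ω) t).1 ∧
        ∀ n, Qg n (φv t 0 n ω) = (sagaState Qg μ (fun u => σp u ω) t).2 n := by
    intro ω t
    induction t with
    | zero => exact ⟨hw00 ω, fun n => hφ00 n ω⟩
    | succ t ih =>
      have h := base_step ω t ih N le_rfl
      exact ⟨(hwepoch t ω).trans h.1, fun n => by rw [hφepoch t n ω]; exact h.2 n⟩
  have key : ∀ (ω : Ω) (t i' : ℕ), i' ≤ N →
      w t i' ω = (sagaInner Qg μ (σp t ω) i' (sagaState Qg μ (fun u => σp u ω) t)).1 :=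
    fun ω t i' h => (base_step ω t (base ω t) i' h).1
  -- history variables in terms of iterates
  have hA : ∀ (ω : Ω) (t i' : ℕ), i' ≤ N → ∀ j : Fin N, (j : ℕ) < i' →
      φv t i' (σp t ω j) ω = w t ((j : ℕ) + 1) ω := by
    intro ω t i'
    induction i' with
    | zero => intro _ j hj; exact absurd hj (Nat.not_lt_zero _)
    | succ k ih =>
      intro hk1 j hj
      have hkN : k < N := hk1
      rcases Nat.lt_succ_iff_lt_or_eq.mp hj with h | h
      · have hne : σp t ω j ≠ σp t ω ⟨k, hkN⟩ := by
          intro hEq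
          have hj' : j = ⟨k, hkN⟩ := (σp t ω).injective hEq
          have := congrArg Fin.val hj'
          simp at this
          omega
        rw [hφrec2 t ⟨k, hkN⟩ _ ω hne]
        exact ih (le_of_lt hkN) j h
      · have hj' : j = ⟨k, hkN⟩ := Fin.ext h
        rw [hj']
        exact hφrec1 t ⟨k, hkN⟩ ω
  have hB : ∀ (ω : Ω) (t i' : ℕ), i' ≤ N → ∀ n : Fin N,
      (∀ j : Fin N, (j : ℕ) < i' → σp t ω j ≠ n) → φv t i' n ω = φv t 0 n ω := by
    intro ω t i'
    induction i' with
    | zero => intro _ n _; rfl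
    | succ k ih =>
      intro hk1 n hn
      have hkN : k < N := hk1
      have hne : n ≠ σp t ω ⟨k, hkN⟩ := Ne.symm (hn ⟨k, hkN⟩ (Nat.lt_succ_self k))
      rw [hφrec2 t ⟨k, hkN⟩ n ω hne]
      exact ih (le_of_lt hkN) n (fun j hj => hn j (hj.trans (Nat.lt_succ_self k)))

  intro t ht i hiN
  obtain ⟨T, rfl⟩ : ∃ T, t = T + 1 := ⟨t - 1, (Nat.succ_pred_eq_of_pos ht).symm⟩
  simp only [Nat.add_sub_cancel]
  set V : Ω → (Fin (T+2) → Equiv.Perm (Fin N)) := fun ω u => σp u ω with hV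
  set dx : (Fin (T+2) → Equiv.Perm (Fin N)) → ℕ → Equiv.Perm (Fin N) :=
    fun d u => if h : u < T+2 then d ⟨u, h⟩ else 1 with hdx
  set W' : (Fin (T+2) → Equiv.Perm (Fin N)) → ℕ → ℕ → EuclideanSpace ℝ (Fin M) :=
    fun d t' k => (sagaInner Qg μ (dx d t') k (sagaState Qg μ (dx d) t')).1 with hW'
  have hdxV : ∀ (ω : Ω) (u : ℕ), u < T+2 → dx (V ω) u = σp u ω := by
    intro ω u hu; simp only [hdx, hV, dif_pos hu]
  have hwW : ∀ (ω : Ω) (t' k : ℕ), t' ≤ T+1 → k ≤ N → w t' k ω = W' (V ω) t' k := by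
    intro ω t' k ht' hk
    rw [key ω t' k hk]
    have hstate : sagaState Qg μ (fun u => σp u ω) t' = sagaState Qg μ (dx (V ω)) t' :=
      sagaState_congr Qg μ t' (fun u hu => (hdxV ω u (by omega)).symm)
    simp only [hW']
    rw [hdxV ω t' (by omega), ← hstate]
  have hsetEq : ∀ d : Fin (T+2) → Equiv.Perm (Fin N),
      V ⁻¹' {d} = ⋂ u ∈ Finset.range (T+2), (σp u) ⁻¹' {dx d u} := by
    intro d
    ext ω
    simp only [Set.mem_preimage, Set.mem_singleton_iff, Set.mem_iInter, Finset.mem_range,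
      funext_iff, hV, hdx]
    constructor
    · intro h u hu
      simp only [dif_pos hu]
      exact h ⟨u, hu⟩
    · intro h v
      have := h v.1 v.2
      simp only [dif_pos v.2] at this
      simpa using this
  have hVfib : ∀ d, MeasurableSet (V ⁻¹' {d}) := by
    intro d
    rw [hsetEq d]
    exact MeasurableSet.biInter (Set.to_countable _)
      (fun u _ => hσmeas u (MeasurableSpace.measurableSet_top))
  set c : ℝ := (((N.factorial : ℝ≥0∞))⁻¹ ^ (T+2)).toReal with hc
  have hVfibval : ∀ d, (P (V ⁻¹' {d})).toReal = c := by
    intro d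
    rw [hsetEq d, hσindep.meas_biInter (fun u _ => ⟨{dx d u}, MeasurableSpace.measurableSet_top, rfl⟩)]
    have heach : ∀ u ∈ Finset.range (T+2), P ((σp u) ⁻¹' {dx d u}) = ((N.factorial : ℝ≥0∞))⁻¹ :=
      fun u _ => hσunif u (dx d u)
    rw [Finset.prod_congr rfl heach, Finset.prod_const, Finset.card_range, hc]
  have hint : ∀ h : (Fin (T+2) → Equiv.Perm (Fin N)) → ℝ,
      ∫ ω, h (V ω) ∂P = c * ∑ d, h d := by
    intro h
    rw [integral_comp_finite' P V hVfib h, Finset.mul_sum]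
    exact Finset.sum_congr rfl fun d _ => by rw [hVfibval d]
  set g : (Fin (T+2) → Equiv.Perm (Fin N)) → Fin N → ℝ :=
    fun d j => ‖W' d T ((((dx d T)⁻¹ (dx d (T+1) j) : Fin N) : ℕ) + 1)‖ ^ 2 with hg
  set H : (Fin (T+2) → Equiv.Perm (Fin N)) → ℝ :=
    fun d => ∑ j : Fin N, if (j : ℕ) < i then ‖W' d (T+1) ((j : ℕ) + 1)‖ ^ 2 else g d j with hH
  have hφpt : ∀ ω, (∑ n, ‖φv (T+1) i n ω‖ ^ 2) = H (V ω) := by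
    intro ω
    rw [← Equiv.sum_comp (σp (T+1) ω) (fun n => ‖φv (T+1) i n ω‖ ^ 2)]
    simp only [hH]
    refine Finset.sum_congr rfl fun j _ => ?_
    by_cases hj : (j : ℕ) < i
    · rw [if_pos hj, hA ω (T+1) i hiN.le j hj, hwW ω (T+1) ((j : ℕ)+1) le_rfl (by omega)]
    · rw [if_neg hj]
      have hnotsel : ∀ j' : Fin N, (j' : ℕ) < i → σp (T+1) ω j' ≠ σp (T+1) ω j := by
        intro j' hj' hEq
        exact hj ((σp (T+1) ω).injective hEq ▸ hj')
      rw [hB ω (T+1) i hiN.le _ hnotsel, hφepoch T _ ω]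
      have hj0 : σp T ω ((σp T ω)⁻¹ (σp (T+1) ω j)) = σp (T+1) ω j :=
        Equiv.apply_symm_apply _ _
      rw [← hj0, hA ω T N le_rfl _ (Fin.is_lt _),
        hwW ω T _ (by omega) (Nat.succ_le_of_lt (Fin.is_lt _))]
      simp only [hg]
      rw [← hdxV ω T (by omega), ← hdxV ω (T+1) (by omega)]
  have hw2 : ∀ k : ℕ, k < N →
      ∫ ω, ‖w (T+1) (k+1) ω‖ ^ 2 ∂P = c * ∑ d, ‖W' d (T+1) (k+1)‖ ^ 2 := by
    intro k hk
    rw [← hint (fun d => ‖W' d (T+1) (k+1)‖ ^ 2)]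
    exact integral_congr_ae (Filter.Eventually.of_forall fun ω =>
      congrArg (fun z => ‖z‖ ^ 2) (hwW ω (T+1) (k+1) le_rfl (by omega)))
  have hw3 : ∀ k : ℕ, k < N →
      ∫ ω, ‖w T (k+1) ω‖ ^ 2 ∂P = c * ∑ d, ‖W' d T (k+1)‖ ^ 2 := by
    intro k hk
    rw [← hint (fun d => ‖W' d T (k+1)‖ ^ 2)]
    exact integral_congr_ae (Filter.Eventually.of_forall fun ω =>
      congrArg (fun z => ‖z‖ ^ 2) (hwW ω T (k+1) (by omega) (by omega)))
  have hLHS : ∫ ω, (∑ n, ‖φv (T+1) i n ω‖ ^ 2) ∂P = c * ∑ d, H d := by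
    rw [← hint H]
    exact integral_congr_ae (Filter.Eventually.of_forall hφpt)
  have hgsum : ∀ d, (∑ j : Fin N, g d j) = ∑ k ∈ Finset.range N, ‖W' d T (k+1)‖ ^ 2 := by
    intro d
    have he := Equiv.sum_comp ((dx d (T+1)).trans (dx d T)⁻¹ : Equiv.Perm (Fin N))
      (fun n : Fin N => ‖W' d T ((n : ℕ) + 1)‖ ^ 2)
    rw [← Fin.sum_univ_eq_sum_range (fun k => ‖W' d T (k+1)‖ ^ 2) N, ← he]
    simp only [hg, Equiv.trans_apply]
  have hconst : ∀ j j' : Fin N, (∑ d, g d j) = ∑ d, g d j' := by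
    intro j j'
    set e : (Fin (T+2) → Equiv.Perm (Fin N)) ≃ (Fin (T+2) → Equiv.Perm (Fin N)) :=
      Equiv.piCongrRight (fun u => if u = Fin.last (T+1)
        then Equiv.mulRight (Equiv.swap j' j) else Equiv.refl _) with he
    refine Fintype.sum_equiv e (fun d => g d j) (fun d => g d j') ?_
    intro d
    have happ : ∀ u, e d u = if u = Fin.last (T+1) then d u * Equiv.swap j' j else d u := by
      intro u
      by_cases hu : u = Fin.last (T+1) <;> simp [he, Equiv.piCongrRight, hu]
    have hdd : ∀ u : ℕ, u ≤ T → dx (e d) u = dx d u := by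
      intro u hu
      have hne : (⟨u, by omega⟩ : Fin (T+2)) ≠ Fin.last (T+1) := by
        intro hEq
        have := congrArg Fin.val hEq
        simp [Fin.last] at this
        omega
      simp only [hdx, dif_pos (show u < T+2 by omega)]
      rw [happ, if_neg hne]
    have hdlast : dx (e d) (T+1) = dx d (T+1) * Equiv.swap j' j := by
      simp only [hdx, dif_pos (show T+1 < T+2 by omega)]
      rw [happ]
      have hlasteq : (⟨T + 1, show T + 1 < T + 2 by omega⟩ : Fin (T+2)) = Fin.last (T+1) := rfl
      rw [if_pos hlasteq]
    have hWe : ∀ k', W' (e d) T k' = W' d T k' := by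
      intro k'
      simp only [hW']
      rw [sagaState_congr Qg μ T (fun u hu => hdd u (by omega)), hdd T le_rfl]
    simp only [hg]
    rw [hWe, hdd T le_rfl, hdlast, Equiv.Perm.mul_apply, Equiv.swap_apply_left]
  have hNS : (N : ℝ) * (∑ d, g d ⟨0, hNpos⟩) = ∑ d, ∑ k ∈ Finset.range N, ‖W' d T (k+1)‖ ^ 2 := by
    have h1 : (∑ j : Fin N, ∑ d, g d j) = ∑ d, ∑ k ∈ Finset.range N, ‖W' d T (k+1)‖ ^ 2 := by
      rw [Finset.sum_comm]
      exact Finset.sum_congr rfl fun d _ => hgsum d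
    have h2 : (∑ j : Fin N, ∑ d, g d j) = ∑ _j : Fin N, ∑ d, g d ⟨0, hNpos⟩ :=
      Finset.sum_congr rfl fun j _ => hconst j ⟨0, hNpos⟩
    rw [← h1, h2, Finset.sum_const, Finset.card_univ, Fintype.card_fin, nsmul_eq_mul]
  have hHsum : (∑ d, H d) =
      (∑ k ∈ Finset.range i, ∑ d, ‖W' d (T+1) (k+1)‖ ^ 2) +
        ((N : ℝ) - i) * (∑ d, g d ⟨0, hNpos⟩) := by
    simp only [hH]
    rw [Finset.sum_comm]
    have hstep : ∀ j : Fin N,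
        (∑ d, if (j : ℕ) < i then ‖W' d (T+1) ((j : ℕ)+1)‖ ^ 2 else g d j) =
        if (j : ℕ) < i then (∑ d, ‖W' d (T+1) ((j : ℕ)+1)‖ ^ 2)
          else (∑ d, g d ⟨0, hNpos⟩) := by
      intro j
      by_cases hj : (j : ℕ) < i
      · simp only [if_pos hj]
      · simp only [if_neg hj]; exact hconst j ⟨0, hNpos⟩
    rw [Finset.sum_congr rfl fun j _ => hstep j]
    rw [Fin.sum_univ_eq_sum_range
      (fun k => if k < i then (∑ d, ‖W' d (T+1) (k+1)‖ ^ 2) else (∑ d, g d ⟨0, hNpos⟩)) N]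
    rw [Finset.sum_ite]
    congr 1
    · rw [show (Finset.range N).filter (fun k => k < i) = Finset.range i from by
        ext k; simp only [Finset.mem_filter, Finset.mem_range]; omega]
    · rw [Finset.sum_const, nsmul_eq_mul,
        show ((Finset.range N).filter (fun k => ¬ k < i)).card = N - i from by
          rw [show (Finset.range N).filter (fun k => ¬ k < i) = Finset.Ico i N from by
            ext k; simp only [Finset.mem_filter, Finset.mem_range, Finset.mem_Ico]; omega,
            Nat.card_Ico],
        Nat.cast_sub hiN.le]
  rw [hLHS, hHsum]
  rw [Finset.sum_congr rfl (fun k hk => hw2 k (by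
    have := Finset.mem_range.mp hk; omega))]
  rw [Finset.sum_congr rfl (fun k hk => hw3 k (Finset.mem_range.mp hk))]
  rw [← Finset.mul_sum, ← Finset.mul_sum]
  rw [show (∑ k ∈ Finset.range N, ∑ d, ‖W' d T (k+1)‖ ^ 2)
      = (N : ℝ) * ∑ d, g d ⟨0, hNpos⟩ from by rw [Finset.sum_comm, ← hNS]]
  have hNne : (N : ℝ) ≠ 0 := Nat.cast_ne_zero.mpr (by omega)
  field_simp
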